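/- If Z₁,…,Z_{n²} are i.i.d. random variables taking values in a finite set of codes 𝒞 with P(Z_i = C) = G(C), and for a fixed state sequence t^n the expected error satisfies Σ_C G(C) P_e(C,t^n) ≤ ν, then the probability that Σ_{i=1}^{n²} P_e(Z_i, t^n) > λn² is less than e^{−λn²}, where λ = log(ν·e² + 1). -/

import Mathlib

open scoped BigOperators
open Matrix Filter Topology
open scoped ComplexOrder

/-- Trace norm (sum of singular values) of a complex matrix. -/
noncomputable def traceNorm {ι : Type*} [Fintype ι] [DecidableEq ι]
    (A : Matrix ι ι ℂ) : ℝ :=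
  ((Matrix.posSemidef_conjTranspose_mul_self A).1.eigenvectorUnitary.1 *
      diagonal (((↑) : ℝ → ℂ) ∘ (√·) ∘ (Matrix.posSemidef_conjTranspose_mul_self A).1.eigenvalues) *
      (star (Matrix.posSemidef_conjTranspose_mul_self A).1.eigenvectorUnitary :
        Matrix ι ι ℂ)).trace.re

/-- A density operator: positive semidefinite with unit trace. -/
def IsDensity {ι : Type*} [Fintype ι] (ρ : Matrix ι ι ℂ) : Prop :=
  ρ.PosSemidef ∧ ρ.trace = 1

/-- Von Neumann entropy `S(ρ) = -tr(ρ log ρ)` (base-2 logarithm), via eigenvalues. -/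
noncomputable def vnEntropy {ι : Type*} [Fintype ι] [DecidableEq ι]
    (ρ : Matrix ι ι ℂ) : ℝ :=
  if h : ρ.IsHermitian then -∑ i, h.eigenvalues i * Real.logb 2 (h.eigenvalues i) else 0

/-- Holevo quantity `χ(P, {ρ_x})`. -/
noncomputable def holevo {X ι : Type*} [Fintype X] [Fintype ι] [DecidableEq ι]
    (P : X → ℝ) (ρ : X → Matrix ι ι ℂ) : ℝ :=
  vnEntropy (∑ x, (P x : ℂ) • ρ x) - ∑ x, P x * vnEntropy (ρ x)

/-- The set of probability distributions on a finite type. -/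
def FinDist (α : Type*) [Fintype α] : Type _ :=
  {p : α → ℝ // (∀ a, 0 ≤ p a) ∧ ∑ a, p a = 1}

/-- Tensor-product state corresponding to a codeword and a state sequence. -/
noncomputable def prodState {d n : ℕ} {X Θ' : Type*}
    (ρ : X → Θ' → Matrix (Fin d) (Fin d) ℂ) (c : Fin n → X) (t : Fin n → Θ') :
    Matrix (Fin n → Fin d) (Fin n → Fin d) ℂ :=
  fun a b => ∏ i, ρ (c i) (t i) (a i) (b i)

/-- A POVM: positive semidefinite operators summing to the identity. -/
def IsPOVM {ι κ : Type*} [Fintype ι] [DecidableEq ι] [Fintype κ]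
    (D : κ → Matrix ι ι ℂ) : Prop :=
  (∀ j, (D j).PosSemidef) ∧ ∑ j, D j = 1

/-- Average decoding error of a code under state sequence `t`. -/
noncomputable def avgError {d n : ℕ} {X Θ' : Type*} {J : ℕ}
    (ρ : X → Θ' → Matrix (Fin d) (Fin d) ℂ)
    (c : Fin J → Fin n → X)
    (D : Fin J → Matrix (Fin n → Fin d) (Fin n → Fin d) ℂ)
    (t : Fin n → Θ') : ℝ :=
  1 - (1 / (J : ℝ)) * ∑ j, ((prodState ρ (c j) t * D j).trace).re

/-- Holevo quantity of an ensemble with uniform distribution. -/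
noncomputable def uniformHolevo {ι : Type*} [Fintype ι] [DecidableEq ι] {J : ℕ}
    (τ : Fin J → Matrix ι ι ℂ) : ℝ :=
  vnEntropy ((J : ℂ)⁻¹ • ∑ j, τ j) - (1 / (J : ℝ)) * ∑ j, vnEntropy (τ j)

/-- Symmetrizability of a classical-quantum arbitrarily varying channel. -/
def Symmetrizable {d : ℕ} {X Θ' : Type*} [Fintype X] [Fintype Θ']
    (ρ : X → Θ' → Matrix (Fin d) (Fin d) ℂ) : Prop :=
  ∃ U : X → Θ' → ℝ, (∀ x, (∀ t, 0 ≤ U x t) ∧ ∑ t, U x t = 1) ∧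
    ∀ x x', ∑ t, (U x t : ℂ) • ρ x' t = ∑ t, (U x' t : ℂ) • ρ x t

/-- `R` is an achievable secrecy rate for the cq arbitrarily varying wiretap channel (no CSI). -/
def AchievableSecrecyRate {d : ℕ} {X Θ' : Type*} [Fintype X] [Fintype Θ']
    (ρ σ : X → Θ' → Matrix (Fin d) (Fin d) ℂ) (R : ℝ) : Prop :=
  ∀ ε > (0:ℝ), ∀ δ > (0:ℝ), ∀ ζ > (0:ℝ), ∃ N : ℕ, ∀ n ≥ N,
    ∃ J : ℕ, 0 < J ∧ ∃ c : Fin J → Fin n → X,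
      ∃ D : Fin J → Matrix (Fin n → Fin d) (Fin n → Fin d) ℂ, IsPOVM D ∧
        Real.logb 2 J / n > R - δ ∧
        (∀ t : Fin n → Θ', avgError ρ c D t < ε) ∧
        (∀ t : Fin n → Θ',
          (1 / (n : ℝ)) * uniformHolevo (fun j => prodState σ (c j) t) < ζ)

/-- `R` is an achievable secrecy rate with CSI at the transmitter. -/
def AchievableSecrecyRateCSI {d : ℕ} {X Θ' : Type*} [Fintype X] [Fintype Θ']
    (ρ σ : X → Θ' → Matrix (Fin d) (Fin d) ℂ) (R : ℝ) : Prop :=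
  ∀ ε > (0:ℝ), ∀ δ > (0:ℝ), ∀ ζ > (0:ℝ), ∃ N : ℕ, ∀ n ≥ N,
    ∃ J : ℕ, 0 < J ∧ ∃ c : (Fin n → Θ') → Fin J → Fin n → X,
      ∃ D : Fin J → Matrix (Fin n → Fin d) (Fin n → Fin d) ℂ, IsPOVM D ∧
        Real.logb 2 J / n > R - δ ∧
        (∀ t : Fin n → Θ', avgError ρ (c t) D t < ε) ∧
        (∀ t : Fin n → Θ',
          (1 / (n : ℝ)) * uniformHolevo (fun j => prodState σ (c t j) t) < ζ)

/-- Secrecy capacity (no CSI). -/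
noncomputable def secrecyCapacity {d : ℕ} {X Θ' : Type*} [Fintype X] [Fintype Θ']
    (ρ σ : X → Θ' → Matrix (Fin d) (Fin d) ℂ) : ℝ :=
  sSup {R : ℝ | 0 ≤ R ∧ AchievableSecrecyRate ρ σ R}

/-- Secrecy capacity with CSI at the transmitter. -/
noncomputable def secrecyCapacityCSI {d : ℕ} {X Θ' : Type*} [Fintype X] [Fintype Θ']
    (ρ σ : X → Θ' → Matrix (Fin d) (Fin d) ℂ) : ℝ :=
  sSup {R : ℝ | 0 ≤ R ∧ AchievableSecrecyRateCSI ρ σ R}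

/-- An orthogonal projection. -/
def IsProj {ι : Type*} [Fintype ι] (Q : Matrix ι ι ℂ) : Prop :=
  Qᴴ = Q ∧ Q * Q = Q

/-- Spectral projector of a Hermitian matrix onto the eigenvalues lying in `[lo, hi]`. -/
noncomputable def specProj {ι : Type*} [Fintype ι] [DecidableEq ι] {ρ : Matrix ι ι ℂ}
    (h : ρ.IsHermitian) (lo hi : ℝ) : Matrix ι ι ℂ :=
  (h.eigenvectorUnitary : Matrix ι ι ℂ) *
    Matrix.diagonal
      (fun k => if lo ≤ h.eigenvalues k ∧ h.eigenvalues k ≤ hi then (1 : ℂ) else 0) *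
    (h.eigenvectorUnitary : Matrix ι ι ℂ)ᴴ

/-- Tensor product of a family of `d × d` matrices. -/
noncomputable def tensorFam {d n : ℕ} (M : Fin n → Matrix (Fin d) (Fin d) ℂ) :
    Matrix (Fin n → Fin d) (Fin n → Fin d) ℂ :=
  Matrix.of fun a b => ∏ i, M i (a i) (b i)

open Classical in
noncomputable def invSqrt {ι : Type*} [Fintype ι] [DecidableEq ι]
    (M : Matrix ι ι ℂ) : Matrix ι ι ℂ :=
  if h : M.PosSemidef then (h.1.eigenvectorUnitary.1 * diagonal (((↑) : ℝ → ℂ) ∘ (√·) ∘ h.1.eigenvalues) *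
    (star h.1.eigenvectorUnitary : Matrix ι ι ℂ))⁻¹ else 0

open Classical in
/-- Chernoff-type bound: for `n²` i.i.d. code-valued random variables with per-sample expected
error at most `ν`, the probability that the total error exceeds `λn²` with
`λ = log(ν e² + 1)` is less than `e^{-λn²}`. -/
theorem derandomization_chernoff (C : Type) [Fintype C] [Nonempty C]
    (G : C → ℝ) (hG0 : ∀ c, 0 ≤ G c) (hG1 : ∑ c, G c = 1)
    (Pe : C → ℝ) (hPe : ∀ c, 0 ≤ Pe c ∧ Pe c ≤ 1)
    (ν : ℝ) (hν : 0 < ν) (hmean : ∑ c, G c * Pe c ≤ ν)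
    (n : ℕ) (hn : 0 < n) :
    ∑ z : Fin (n ^ 2) → C,
        (if Real.log (ν * Real.exp 2 + 1) * (n ^ 2 : ℝ) < ∑ i, Pe (z i)
          then ∏ i, G (z i) else 0) <
      Real.exp (-(Real.log (ν * Real.exp 2 + 1) * (n ^ 2 : ℝ))) := by
  set lam := Real.log (ν * Real.exp 2 + 1) with hlam
  set m := n ^ 2 with hm
  have hm0 : 0 < m := by positivity
  have hmr : ((n : ℝ) ^ 2) = (m : ℝ) := by push_cast [hm]; ring
  -- chord bound for exp on [0,1]
  have hexp : ∀ c, Real.exp (2 * Pe c) ≤ 1 + (Real.exp 2 - 1) * Pe c := by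
    intro c
    obtain ⟨h0, h1⟩ := hPe c
    have hcv := convexOn_exp.2 (Set.mem_univ (0:ℝ)) (Set.mem_univ (2:ℝ))
      (by linarith : (0:ℝ) ≤ 1 - Pe c) h0 (by ring)
    simp only [smul_eq_mul, mul_zero, zero_add, Real.exp_zero] at hcv
    calc Real.exp (2 * Pe c) = Real.exp (Pe c * 2) := by ring_nf
      _ ≤ (1 - Pe c) * 1 + Pe c * Real.exp 2 := hcv
      _ = 1 + (Real.exp 2 - 1) * Pe c := by ring
  set A := ∑ c, G c * Real.exp (2 * Pe c) with hA
  have hA1 : 1 ≤ A := by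
    rw [← hG1]
    apply Finset.sum_le_sum
    intro c _
    have : (1:ℝ) ≤ Real.exp (2 * Pe c) := by
      rw [← Real.exp_zero]
      exact Real.exp_le_exp.mpr (by have := (hPe c).1; linarith)
    nlinarith [hG0 c]
  have hAlt : A < Real.exp lam := by
    have h1 : A ≤ 1 + (Real.exp 2 - 1) * ∑ c, G c * Pe c := by
      calc A ≤ ∑ c, G c * (1 + (Real.exp 2 - 1) * Pe c) := by
              apply Finset.sum_le_sum
              intro c _
              exact mul_le_mul_of_nonneg_left (hexp c) (hG0 c)
        _ = ∑ c, G c + ∑ c, (Real.exp 2 - 1) * (G c * Pe c) := by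
              rw [← Finset.sum_add_distrib]; congr 1; ext c; ring
        _ = 1 + (Real.exp 2 - 1) * ∑ c, G c * Pe c := by
              rw [hG1, Finset.mul_sum]
    have he2 : (1:ℝ) < Real.exp 2 := by
      rw [← Real.exp_zero]; exact Real.exp_lt_exp.mpr (by norm_num)
    have h2 : (1:ℝ) + (Real.exp 2 - 1) * ∑ c, G c * Pe c < ν * Real.exp 2 + 1 := by
      have hs0 : 0 ≤ ∑ c, G c * Pe c :=
        Finset.sum_nonneg fun c _ => mul_nonneg (hG0 c) (hPe c).1
      nlinarith
    have h3 : Real.exp lam = ν * Real.exp 2 + 1 := by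
      rw [hlam, Real.exp_log]
      positivity
    linarith
  have hA0 : 0 ≤ A := le_trans zero_le_one hA1
  -- product identity
  have key : A ^ m = ∑ z : Fin m → C, ∏ i : Fin m, (G (z i) * Real.exp (2 * Pe (z i))) := by
    rw [hA]
    rw [← Fin.prod_const m (∑ c, G c * Real.exp (2 * Pe c)), Finset.prod_univ_sum]
    rw [Fintype.piFinset_univ]
  -- pointwise bound
  have hterm : ∀ z : Fin m → C,
      (if lam * ((n : ℝ) ^ 2) < ∑ i, Pe (z i) then ∏ i, G (z i) else 0)
        ≤ Real.exp (-(2 * (lam * (m : ℝ)))) * ∏ i, (G (z i) * Real.exp (2 * Pe (z i))) := by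
    intro z
    have hprodG : 0 ≤ ∏ i, G (z i) := Finset.prod_nonneg fun i _ => hG0 (z i)
    have hrw : ∏ i, (G (z i) * Real.exp (2 * Pe (z i)))
        = (∏ i, G (z i)) * Real.exp (∑ i, 2 * Pe (z i)) := by
      rw [Finset.prod_mul_distrib, Real.exp_sum]
    by_cases hc : lam * ((n : ℝ) ^ 2) < ∑ i, Pe (z i)
    · rw [if_pos hc, hrw, ← mul_assoc, mul_comm (Real.exp _) (∏ i, G (z i)), mul_assoc,
        ← Real.exp_add]
      have hsum : ∑ i, 2 * Pe (z i) = 2 * ∑ i, Pe (z i) := by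
        rw [Finset.mul_sum]
      have harg : 0 ≤ -(2 * (lam * (m : ℝ))) + ∑ i, 2 * Pe (z i) := by
        rw [hsum, ← hmr]; nlinarith
      nlinarith [Real.one_le_exp harg, hprodG]
    · rw [if_neg hc]
      have : 0 ≤ ∏ i, (G (z i) * Real.exp (2 * Pe (z i))) :=
        Finset.prod_nonneg fun i _ => mul_nonneg (hG0 (z i)) (Real.exp_pos _).le
      positivity
  calc ∑ z : Fin m → C, (if lam * ((n : ℝ) ^ 2) < ∑ i, Pe (z i) then ∏ i, G (z i) else 0)
      ≤ ∑ z : Fin m → C,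
          Real.exp (-(2 * (lam * (m : ℝ)))) * ∏ i, (G (z i) * Real.exp (2 * Pe (z i))) :=
        Finset.sum_le_sum fun z _ => hterm z
    _ = Real.exp (-(2 * (lam * (m : ℝ)))) * A ^ m := by
        rw [← Finset.mul_sum, key]
    _ < Real.exp (-(2 * (lam * (m : ℝ)))) * Real.exp (lam * (m : ℝ)) := by
        apply mul_lt_mul_of_pos_left _ (Real.exp_pos _)
        calc A ^ m < Real.exp lam ^ m :=
              pow_lt_pow_left₀ hAlt hA0 hm0.ne'
          _ = Real.exp (lam * (m : ℝ)) := by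
              rw [← Real.exp_nat_mul]; ring_nf
    _ = Real.exp (-(lam * ((n : ℝ) ^ 2))) := by
        rw [← Real.exp_add, hmr]; ring_nf
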